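/- Let G be a graph and H an attachment set. Then η(altan(G,H)) = η(altan²(G,H)), i.e., the nullity of the second iterated altan equals the nullity of the first altan. -/

import Mathlib

open scoped Classical

/-- The nullity of a graph: dimension of the kernel of its real adjacency matrix. -/
noncomputable def nullity {V : Type*} [Fintype V] (G : SimpleGraph V) : ℕ :=
  letI := Classical.decEq V
  letI := Classical.decRel G.Adj
  Module.finrank ℝ ↥(LinearMap.ker (Matrix.toLin' (G.adjMatrix ℝ)))

/-- `q` is a kernel eigenvector of `G`: the sum of `q` over each neighbourhood is `0`. -/
def IsKernelVector {V : Type*} [Fintype V] (G : SimpleGraph V) (q : V → ℝ) : Prop :=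
  ∀ v : V, ∑ u : V, (if G.Adj v u then q u else 0) = 0

/-- Underlying relation of the altan construction: vertices are `V ⊕ (Fin h ⊕ Fin h)`,
where `Sum.inr (Sum.inl i)` is `x_{i+1}` and `Sum.inr (Sum.inr i)` is `y_{i+1}`
(0-indexed versions of the 1-indexed `x_i, y_i`). -/
def altanRel {V : Type*} {h : ℕ} [NeZero h] (G : SimpleGraph V) (H : Fin h → V) :
    (V ⊕ (Fin h ⊕ Fin h)) → (V ⊕ (Fin h ⊕ Fin h)) → Prop
  | Sum.inl u, Sum.inl w => G.Adj u w
  | Sum.inl u, Sum.inr (Sum.inl i) => u = H i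
  | Sum.inr (Sum.inl i), Sum.inr (Sum.inr j) => j = i ∨ i = j + 1
  | _, _ => False

/-- The altan of `(G, H)`. -/
def altan {V : Type*} {h : ℕ} [NeZero h] (G : SimpleGraph V) (H : Fin h → V) :
    SimpleGraph (V ⊕ (Fin h ⊕ Fin h)) :=
  SimpleGraph.fromRel (altanRel G H)

/-- The special vector: `s(y_i) = (-1)^i` (1-indexed), `0` elsewhere. -/
def specialVector (V : Type*) (h : ℕ) : (V ⊕ (Fin h ⊕ Fin h)) → ℝ
  | Sum.inr (Sum.inr j) => (-1 : ℝ) ^ ((j : ℕ) + 1)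
  | _ => 0

/-- The induced attachment set `H' = (y_1, ..., y_h)` of the altan. -/
def inducedAttachment (V : Type*) (h : ℕ) : Fin h → (V ⊕ (Fin h ⊕ Fin h)) :=
  fun i => Sum.inr (Sum.inr i)

/-! ### Infrastructure : kernel as a submodule -/

section Infra
variable {V' : Type*} [Fintype V']

noncomputable def Sfun (G' : SimpleGraph V') (x : V' → ℝ) (v : V') : ℝ :=
  ∑ u : V', if G'.Adj v u then x u else 0

lemma isKernelVector_iff (G' : SimpleGraph V') (x : V' → ℝ) :
    IsKernelVector G' x ↔ ∀ v, Sfun G' x v = 0 := Iff.rfl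

lemma Sfun_add (G' : SimpleGraph V') (x y : V' → ℝ) (v : V') :
    Sfun G' (x + y) v = Sfun G' x v + Sfun G' y v := by
  unfold Sfun
  rw [← Finset.sum_add_distrib]
  refine Finset.sum_congr rfl fun u _ => ?_
  by_cases hu : G'.Adj v u <;> simp [hu]

lemma Sfun_smul (G' : SimpleGraph V') (c : ℝ) (x : V' → ℝ) (v : V') :
    Sfun G' (c • x) v = c * Sfun G' x v := by
  unfold Sfun
  rw [Finset.mul_sum]
  refine Finset.sum_congr rfl fun u _ => ?_
  by_cases hu : G'.Adj v u <;> simp [hu]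

noncomputable def kSub (G' : SimpleGraph V') : Submodule ℝ (V' → ℝ) where
  carrier := {x | IsKernelVector G' x}
  add_mem' := by
    intro a b ha hb v
    show Sfun G' (a + b) v = 0
    rw [Sfun_add]
    have ha' : Sfun G' a v = 0 := ha v
    have hb' : Sfun G' b v = 0 := hb v
    rw [ha', hb', add_zero]
  zero_mem' := by intro v; simp
  smul_mem' := by
    intro c x hx v
    show Sfun G' (c • x) v = 0
    rw [Sfun_smul]
    have hx' : Sfun G' x v = 0 := hx v
    rw [hx', mul_zero]

lemma mem_kSub {G' : SimpleGraph V'} {x : V' → ℝ} :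
    x ∈ kSub G' ↔ IsKernelVector G' x := Iff.rfl

lemma nullity_eq_finrank (G' : SimpleGraph V') :
    nullity G' = Module.finrank ℝ (kSub G') := by
  unfold nullity
  have : LinearMap.ker (Matrix.toLin' (G'.adjMatrix ℝ)) = kSub G' := by
    ext x
    rw [LinearMap.mem_ker, Matrix.toLin'_apply]
    constructor
    · intro hx v
      have := congrFun hx v
      simpa [Matrix.mulVec, dotProduct, SimpleGraph.adjMatrix_apply,
        ite_mul, one_mul, zero_mul, Sfun] using this
    · intro hx
      funext v
      have := hx v
      simpa [Matrix.mulVec, dotProduct, SimpleGraph.adjMatrix_apply,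
        ite_mul, one_mul, zero_mul, Sfun] using this
  rw [this]

end Infra

/-! ### Fin and alternating-sum lemmas -/

section FinLemmas
variable {h : ℕ} [NeZero h]

lemma sum_ite_or_pair {a b : Fin h} (hab : a ≠ b) (f : Fin h → ℝ) :
    (∑ m : Fin h, if (m = a ∨ m = b) then f m else 0) = f a + f b := by
  have key : ∀ m : Fin h, (if (m = a ∨ m = b) then f m else 0)
      = if m ∈ ({a, b} : Finset (Fin h)) then f m else 0 := by
    intro m; simp
  rw [Finset.sum_congr rfl fun m _ => key m, Finset.sum_ite_mem, Finset.univ_inter,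
    Finset.sum_pair hab]

lemma fin_one_ne_zero (hh : 2 ≤ h) : (1 : Fin h) ≠ 0 := by
  intro hc
  have := congrArg Fin.val hc
  rw [Fin.val_one'] at this
  simp [Nat.mod_eq_of_lt hh] at this

lemma fin_succ_ne_self (hh : 2 ≤ h) (j : Fin h) : j + 1 ≠ j := by
  intro hc
  have : (1 : Fin h) = 0 := by
    have := congrArg (fun z => z - j) hc
    simpa [add_comm, add_sub_cancel_right] using this
  exact fin_one_ne_zero hh this

lemma fin_val_add_one (j : Fin h) (hh : 2 ≤ h) :
    ((j + 1 : Fin h) : ℕ) = (j.val + 1) % h := by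
  rw [Fin.add_def, Fin.val_one']
  rw [Nat.mod_eq_of_lt hh]

lemma fin_exists_succ (i : Fin h) : ∃ j : Fin h, i = j + 1 :=
  ⟨i - 1, by rw [sub_add_cancel]⟩

lemma altClosed (hh : 2 ≤ h) (Z : Fin h → ℝ) (hZ : ∀ j, Z j + Z (j + 1) = 0) :
    ∀ n (hn : n < h), Z ⟨n, hn⟩ = (-1 : ℝ) ^ n * Z ⟨0, by omega⟩ := by
  intro n
  induction n with
  | zero => intro hn; simp
  | succ n ih =>
    intro hn
    have hn' : n < h := by omega
    have e : (⟨n, hn'⟩ : Fin h) + 1 = ⟨n + 1, hn⟩ := by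
      apply Fin.ext
      rw [fin_val_add_one _ hh]
      simp [Nat.mod_eq_of_lt hn]
    have := hZ ⟨n, hn'⟩
    rw [e] at this
    have : Z ⟨n + 1, hn⟩ = -Z ⟨n, hn'⟩ := by linarith
    rw [this, ih hn', pow_succ]
    ring

lemma fin_zero_mk (hh : 2 ≤ h) : (⟨0, by omega⟩ : Fin h) = 0 := by
  apply Fin.ext; simp

lemma altZeroOdd (hh : 2 ≤ h) (ho : Odd h) (Z : Fin h → ℝ)
    (hZ : ∀ j, Z j + Z (j + 1) = 0) : ∀ j, Z j = 0 := by
  have hlast : h - 1 < h := by omega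
  have e : (⟨h - 1, hlast⟩ : Fin h) + 1 = ⟨0, by omega⟩ := by
    apply Fin.ext
    rw [fin_val_add_one _ hh]
    simp [show h - 1 + 1 = h by omega]
  have hcl := altClosed hh Z hZ
  have hw := hZ ⟨h - 1, hlast⟩
  rw [e, hcl (h - 1) hlast] at hw
  have hev : Even (h - 1) := Nat.Odd.sub_odd ho odd_one
  rw [hev.neg_one_pow, one_mul] at hw
  have h0 : Z ⟨0, by omega⟩ = 0 := by linarith
  intro j
  have := hcl j.val j.isLt
  rw [Fin.eta] at this
  rw [this, h0, mul_zero]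

lemma negOnePow_succ (hh : 2 ≤ h) (he : Even h) (j : Fin h) :
    (-1 : ℝ) ^ ((j + 1 : Fin h) : ℕ) = -(-1 : ℝ) ^ (j : ℕ) := by
  rw [fin_val_add_one _ hh]
  by_cases hc : j.val + 1 < h
  · rw [Nat.mod_eq_of_lt hc, pow_succ]; ring
  · have hj : j.val + 1 = h := by have := j.isLt; omega
    rw [hj, Nat.mod_self, pow_zero]
    have ho1 : Odd (j.val) := by
      have : j.val = h - 1 := by omega
      rw [this]; exact Nat.Even.sub_odd (by omega) he odd_one
    rw [ho1.neg_one_pow]; ring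

lemma sumShift (hh : 2 ≤ h) (he : Even h) (f : Fin h → ℝ) :
    (∑ j : Fin h, (-1 : ℝ) ^ (j : ℕ) * f (j + 1))
      = -∑ j : Fin h, (-1 : ℝ) ^ (j : ℕ) * f j := by
  have step : ∀ j : Fin h, (-1 : ℝ) ^ (j : ℕ) * f (j + 1)
      = -(((-1 : ℝ) ^ (((j + 1 : Fin h)) : ℕ)) * f (j + 1)) := by
    intro j; rw [negOnePow_succ hh he j]; ring
  rw [Finset.sum_congr rfl fun j _ => step j]
  rw [Finset.sum_neg_distrib]
  congr 1
  exact Fintype.sum_equiv (Equiv.addRight (1 : Fin h))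
    (fun j => ((-1 : ℝ) ^ (((j + 1 : Fin h)) : ℕ)) * f (j + 1))
    (fun m => ((-1 : ℝ) ^ ((m : Fin h) : ℕ)) * f m) (fun j => rfl)

lemma altZeroEvenSum (hh : 2 ≤ h) (Z : Fin h → ℝ)
    (hZ : ∀ j, Z j + Z (j + 1) = 0)
    (hs : (∑ j : Fin h, (-1 : ℝ) ^ (j : ℕ) * Z j) = 0) : ∀ j, Z j = 0 := by
  have hh2 : 2 ≤ h := hh
  have hcl := altClosed hh Z hZ
  have key : (∑ j : Fin h, (-1 : ℝ) ^ (j : ℕ) * Z j) = h * Z ⟨0, by omega⟩ := by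
    have : ∀ j : Fin h, (-1 : ℝ) ^ (j : ℕ) * Z j = Z ⟨0, by omega⟩ := by
      intro j
      have := hcl j.val j.isLt
      rw [Fin.eta] at this
      rw [this, ← mul_assoc, ← mul_pow]
      simp
    rw [Finset.sum_congr rfl fun j _ => this j, Finset.sum_const, Finset.card_univ,
      Fintype.card_fin, nsmul_eq_mul]
  rw [key] at hs
  have hZ0 : Z ⟨0, by omega⟩ = 0 := by
    have hne : (h : ℝ) ≠ 0 := Nat.cast_ne_zero.mpr (by omega)
    exact (mul_eq_zero.mp hs).resolve_left hne
  intro j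
  have := hcl j.val j.isLt
  rw [Fin.eta] at this
  rw [this, hZ0, mul_zero]

end FinLemmas

/-! ### Adjacency and row lemmas for the altan -/

section AdjLemmas
variable {V : Type*} {h : ℕ} [NeZero h] (G : SimpleGraph V) (H : Fin h → V)

open Sum

@[simp] lemma altan_adj_inl_inl (u w : V) :
    (altan G H).Adj (inl u) (inl w) ↔ G.Adj u w := by
  constructor
  · rintro ⟨hne, h1 | h1⟩
    · exact h1
    · exact h1.symm
  · intro ha
    exact ⟨by simp [ha.ne], Or.inl ha⟩

@[simp] lemma altan_adj_inl_inrl (u : V) (i : Fin h) :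
    (altan G H).Adj (inl u) (inr (inl i)) ↔ u = H i := by
  constructor
  · rintro ⟨hne, h1 | h1⟩
    · exact h1
    · exact h1.elim
  · intro ha; exact ⟨by simp, Or.inl ha⟩

@[simp] lemma altan_adj_inrl_inl (u : V) (i : Fin h) :
    (altan G H).Adj (inr (inl i)) (inl u) ↔ u = H i := by
  rw [SimpleGraph.adj_comm]; exact altan_adj_inl_inrl G H u i

@[simp] lemma altan_adj_inl_inrr (u : V) (j : Fin h) :
    ¬ (altan G H).Adj (inl u) (inr (inr j)) := by
  rintro ⟨hne, h1 | h1⟩ <;> exact h1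

@[simp] lemma altan_adj_inrr_inl (u : V) (j : Fin h) :
    ¬ (altan G H).Adj (inr (inr j)) (inl u) := by
  rintro ⟨hne, h1 | h1⟩ <;> exact h1

@[simp] lemma altan_adj_inrl_inrl (i i' : Fin h) :
    ¬ (altan G H).Adj (inr (inl i)) (inr (inl i')) := by
  rintro ⟨hne, h1 | h1⟩ <;> exact h1

@[simp] lemma altan_adj_inrr_inrr (j j' : Fin h) :
    ¬ (altan G H).Adj (inr (inr j)) (inr (inr j')) := by
  rintro ⟨hne, h1 | h1⟩ <;> exact h1

@[simp] lemma altan_adj_inrl_inrr (i j : Fin h) :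
    (altan G H).Adj (inr (inl i)) (inr (inr j)) ↔ (j = i ∨ i = j + 1) := by
  constructor
  · rintro ⟨hne, h1 | h1⟩
    · exact h1
    · exact h1.elim
  · intro ha; exact ⟨by simp, Or.inl ha⟩

@[simp] lemma altan_adj_inrr_inrl (i j : Fin h) :
    (altan G H).Adj (inr (inr j)) (inr (inl i)) ↔ (j = i ∨ i = j + 1) := by
  rw [SimpleGraph.adj_comm]; exact altan_adj_inrl_inrr G H i j

end AdjLemmas

section Rows
variable {V : Type*} [Fintype V] {h : ℕ} [NeZero h] (G : SimpleGraph V) (H : Fin h → V)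

open Sum

noncomputable def aSum {V' : Type*} {h : ℕ} (H' : Fin h → V') (x : Fin h → ℝ) (w : V') : ℝ :=
  ∑ i : Fin h, if w = H' i then x i else 0

lemma aSum_ind_inrr {V : Type*} {h : ℕ} (x : Fin h → ℝ) (j : Fin h) :
    aSum (inducedAttachment V h) x (inr (inr j)) = x j := by
  unfold aSum inducedAttachment
  simp only [Sum.inr.injEq]
  rw [Finset.sum_ite_eq]
  simp

lemma rowV (x : (V ⊕ (Fin h ⊕ Fin h)) → ℝ) (v : V) :
    Sfun (altan G H) x (inl v)
      = Sfun G (x ∘ inl) v + aSum H (fun i => x (inr (inl i))) v := by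
  unfold aSum
  unfold Sfun
  rw [Fintype.sum_sum_type, Fintype.sum_sum_type]
  simp only [altan_adj_inl_inl, altan_adj_inl_inrl, altan_adj_inl_inrr, if_false,
    Finset.sum_const_zero, add_zero, Function.comp_apply]

lemma rowX (hh : 2 ≤ h) (x : (V ⊕ (Fin h ⊕ Fin h)) → ℝ) (j : Fin h) :
    Sfun (altan G H) x (inr (inl (j + 1)))
      = x (inl (H (j + 1))) + x (inr (inr (j + 1))) + x (inr (inr j)) := by
  unfold Sfun
  rw [Fintype.sum_sum_type, Fintype.sum_sum_type]
  have e1 : (∑ u : V, if (altan G H).Adj (inr (inl (j + 1))) (inl u) then x (inl u) else 0)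
      = x (inl (H (j + 1))) := by
    simp only [altan_adj_inrl_inl]
    rw [Finset.sum_ite_eq' Finset.univ (H (j + 1)) (fun u => x (inl u))]
    simp
  have e2 : (∑ i : Fin h, if (altan G H).Adj (inr (inl (j + 1))) (inr (inl i))
      then x (inr (inl i)) else 0) = 0 := by
    simp only [altan_adj_inrl_inrl, if_false, Finset.sum_const_zero]
  have e3 : (∑ m : Fin h, if (altan G H).Adj (inr (inl (j + 1))) (inr (inr m))
      then x (inr (inr m)) else 0) = x (inr (inr (j + 1))) + x (inr (inr j)) := by
    have cond : ∀ m : Fin h, ((m = j + 1 ∨ j + 1 = m + 1)) = ((m = j + 1 ∨ m = j)) := by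
      intro m
      have : (j + 1 = m + 1) ↔ (m = j) := by
        constructor
        · intro hc; exact (add_left_inj 1).mp hc.symm
        · intro hc; rw [hc]
      simp [this]
    simp only [altan_adj_inrl_inrr, cond]
    exact sum_ite_or_pair (fin_succ_ne_self hh j) (fun m => x (inr (inr m)))
  rw [e1, e2, e3]
  ring

lemma rowY (hh : 2 ≤ h) (x : (V ⊕ (Fin h ⊕ Fin h)) → ℝ) (j : Fin h) :
    Sfun (altan G H) x (inr (inr j))
      = x (inr (inl j)) + x (inr (inl (j + 1))) := by
  unfold Sfun
  rw [Fintype.sum_sum_type, Fintype.sum_sum_type]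
  have e1 : (∑ u : V, if (altan G H).Adj (inr (inr j)) (inl u) then x (inl u) else 0) = 0 := by
    simp only [altan_adj_inrr_inl, if_false, Finset.sum_const_zero]
  have e2 : (∑ i : Fin h, if (altan G H).Adj (inr (inr j)) (inr (inl i))
      then x (inr (inl i)) else 0) = x (inr (inl j)) + x (inr (inl (j + 1))) := by
    have cond : ∀ i : Fin h, ((j = i ∨ i = j + 1)) = ((i = j ∨ i = j + 1)) := by
      intro i; simp [eq_comm]
    simp only [altan_adj_inrr_inrl, cond]
    exact sum_ite_or_pair (Ne.symm (fin_succ_ne_self hh j)) (fun i => x (inr (inl i)))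
  have e3 : (∑ m : Fin h, if (altan G H).Adj (inr (inr j)) (inr (inr m))
      then x (inr (inr m)) else 0) = 0 := by
    simp only [altan_adj_inrr_inrr, if_false, Finset.sum_const_zero]
  rw [e1, e2, e3]
  ring

end Rows

/-! ### The special vector and sigma -/

section Special
variable {V : Type*} [Fintype V] {h : ℕ} [NeZero h]

open Sum

@[simp] lemma specialVector_inl (v : V) : specialVector V h (inl v) = 0 := rfl
@[simp] lemma specialVector_inrl (i : Fin h) : specialVector V h (inr (inl i)) = 0 := rfl
@[simp] lemma specialVector_inrr (j : Fin h) :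
    specialVector V h (inr (inr j)) = (-1 : ℝ) ^ ((j : ℕ) + 1) := rfl

noncomputable def sigmaF (p : (V ⊕ (Fin h ⊕ Fin h)) → ℝ) : ℝ :=
  ∑ j : Fin h, (-1 : ℝ) ^ (j : ℕ) * p (inr (inr j))

lemma sigmaF_add (p q : (V ⊕ (Fin h ⊕ Fin h)) → ℝ) :
    sigmaF (p + q) = sigmaF p + sigmaF q := by
  unfold sigmaF
  rw [← Finset.sum_add_distrib]
  exact Finset.sum_congr rfl fun j _ => by simp [mul_add]

lemma sigmaF_smul (c : ℝ) (p : (V ⊕ (Fin h ⊕ Fin h)) → ℝ) :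
    sigmaF (c • p) = c * sigmaF p := by
  unfold sigmaF
  rw [Finset.mul_sum]
  exact Finset.sum_congr rfl fun j _ => by simp; ring

lemma sigmaF_special : sigmaF (specialVector V h) = -(h : ℝ) := by
  unfold sigmaF
  have : ∀ j : Fin h, (-1 : ℝ) ^ (j : ℕ) * specialVector V h (inr (inr j)) = -1 := by
    intro j
    rw [specialVector_inrr, pow_succ, ← mul_assoc, ← mul_pow]
    simp
  rw [Finset.sum_congr rfl fun j _ => this j, Finset.sum_const, Finset.card_univ,
    Fintype.card_fin, nsmul_eq_mul]
  ring

lemma sEven_kernel (hh : 2 ≤ h) (he : Even h) (G : SimpleGraph V) (H : Fin h → V) :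
    IsKernelVector (altan G H) (specialVector V h) := by
  rw [isKernelVector_iff]
  rintro (v | i | j)
  · rw [rowV]
    have h1 : Sfun G (specialVector V h ∘ inl) v = 0 := by
      unfold Sfun
      refine Finset.sum_eq_zero fun u _ => ?_
      simp
    rw [h1]
    simp [aSum]
  · obtain ⟨j, rfl⟩ := fin_exists_succ i
    rw [rowX G H hh]
    simp only [specialVector_inl, specialVector_inrr]
    rw [pow_succ, pow_succ, negOnePow_succ hh he j]
    ring
  · rw [rowY G H hh]
    simp

end Special

/-! ### The inverse construction -/

section Psi
variable {V : Type*} [Fintype V] {h : ℕ} [NeZero h]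

open Sum
open Fin.NatCast

noncomputable def bF (p : (V ⊕ (Fin h ⊕ Fin h)) → ℝ) (n : ℕ) : ℝ :=
  -(p (inr (inr ((n : Fin h)))))

noncomputable def yF (t : ℝ) (p : (V ⊕ (Fin h ⊕ Fin h)) → ℝ) (n : ℕ) : ℝ :=
  (-1 : ℝ) ^ n * (t + ∑ k ∈ Finset.range n, (-1 : ℝ) ^ (k + 1) * bF p (k + 1))

lemma yF_step (t : ℝ) (p : (V ⊕ (Fin h ⊕ Fin h)) → ℝ) (n : ℕ) :
    yF t p (n + 1) + yF t p n = bF p (n + 1) := by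
  unfold yF
  rw [Finset.sum_range_succ]
  simp only [pow_succ]
  set a := (-1 : ℝ) ^ n with hA
  have ha : a * a = 1 := by rw [hA, ← mul_pow]; norm_num
  linear_combination bF p (n + 1) * ha

lemma bF_val (p : (V ⊕ (Fin h ⊕ Fin h)) → ℝ) (j : Fin h) :
    bF p (j : ℕ) = -(p (inr (inr j))) := by
  unfold bF
  rw [Fin.cast_val_eq_self]

noncomputable def psiF (t : ℝ) (p : (V ⊕ (Fin h ⊕ Fin h)) → ℝ) :
    ((V ⊕ (Fin h ⊕ Fin h)) ⊕ (Fin h ⊕ Fin h)) → ℝ :=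
  Sum.elim p (Sum.elim (fun _ => 0) (fun i => yF t p (i : ℕ)))

@[simp] lemma psiF_inl (t : ℝ) (p) (w : V ⊕ (Fin h ⊕ Fin h)) :
    psiF t p (inl w) = p w := rfl
@[simp] lemma psiF_inrl (t : ℝ) (p : (V ⊕ (Fin h ⊕ Fin h)) → ℝ) (i : Fin h) :
    psiF t p (inr (inl i)) = 0 := rfl
@[simp] lemma psiF_inrr (t : ℝ) (p : (V ⊕ (Fin h ⊕ Fin h)) → ℝ) (j : Fin h) :
    psiF t p (inr (inr j)) = yF t p (j : ℕ) := rfl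

lemma bF_add (p q : (V ⊕ (Fin h ⊕ Fin h)) → ℝ) (n : ℕ) :
    bF (p + q) n = bF p n + bF q n := by
  unfold bF; rw [Pi.add_apply]; ring

lemma bF_smul (c : ℝ) (p : (V ⊕ (Fin h ⊕ Fin h)) → ℝ) (n : ℕ) :
    bF (c • p) n = c * bF p n := by
  unfold bF; rw [Pi.smul_apply, smul_eq_mul]; ring

lemma yF_add (t₁ t₂ : ℝ) (p₁ p₂ : (V ⊕ (Fin h ⊕ Fin h)) → ℝ) (n : ℕ) :
    yF (t₁ + t₂) (p₁ + p₂) n = yF t₁ p₁ n + yF t₂ p₂ n := by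
  unfold yF
  have : ∀ k, (-1 : ℝ) ^ (k + 1) * bF (p₁ + p₂) (k + 1)
      = (-1 : ℝ) ^ (k + 1) * bF p₁ (k + 1) + (-1 : ℝ) ^ (k + 1) * bF p₂ (k + 1) := by
    intro k; rw [bF_add]; ring
  rw [Finset.sum_congr rfl fun k _ => this k, Finset.sum_add_distrib]
  ring

lemma yF_smul (c t : ℝ) (p : (V ⊕ (Fin h ⊕ Fin h)) → ℝ) (n : ℕ) :
    yF (c * t) (c • p) n = c * yF t p n := by
  unfold yF
  have : ∀ k, (-1 : ℝ) ^ (k + 1) * bF (c • p) (k + 1)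
      = c * ((-1 : ℝ) ^ (k + 1) * bF p (k + 1)) := by
    intro k; rw [bF_smul]; ring
  rw [Finset.sum_congr rfl fun k _ => this k, ← Finset.mul_sum]
  ring

lemma psiF_add (t₁ t₂ : ℝ) (p₁ p₂ : (V ⊕ (Fin h ⊕ Fin h)) → ℝ) :
    psiF (t₁ + t₂) (p₁ + p₂) = psiF t₁ p₁ + psiF t₂ p₂ := by
  funext w
  rcases w with w | (i | j)
  · simp
  · simp
  · simp [yF_add]

lemma psiF_smul (c t : ℝ) (p : (V ⊕ (Fin h ⊕ Fin h)) → ℝ) :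
    psiF (c * t) (c • p) = c • psiF t p := by
  funext w
  rcases w with w | (i | j)
  · simp
  · simp
  · simp [yF_smul]

/-- The key membership lemma: the `psiF` construction gives a kernel vector of the
iterated altan. -/
lemma psi_mem (hh : 2 ≤ h) (G : SimpleGraph V) (H : Fin h → V) (t : ℝ)
    (p : (V ⊕ (Fin h ⊕ Fin h)) → ℝ) (hp : IsKernelVector (altan G H) p)
    (hwrap : t + yF t p (h - 1) = bF p 0) :
    IsKernelVector (altan (altan G H) (inducedAttachment V h)) (psiF t p) := by
  rw [isKernelVector_iff]
  rintro (w | i | j)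
  · rw [rowV]
    have h1 : psiF t p ∘ inl = p := by funext u; rfl
    rw [h1]
    have h2 : Sfun (altan G H) p w = 0 := hp w
    rw [h2]
    simp [aSum]
  · obtain ⟨j, rfl⟩ := fin_exists_succ i
    rw [rowX _ _ hh]
    show p (inducedAttachment V h (j + 1)) + yF t p ((j + 1 : Fin h) : ℕ)
      + yF t p (j : ℕ) = 0
    unfold inducedAttachment
    by_cases hc : (j : ℕ) + 1 < h
    · have hv : ((j + 1 : Fin h) : ℕ) = (j : ℕ) + 1 := by
        rw [fin_val_add_one _ hh, Nat.mod_eq_of_lt hc]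
      rw [hv]
      have hstep := yF_step t p (j : ℕ)
      have hb : bF p ((j : ℕ) + 1) = -(p (inr (inr (j + 1)))) := by
        rw [← hv, bF_val]
      rw [hb] at hstep
      linarith
    · have hj : (j : ℕ) + 1 = h := by have := j.isLt; omega
      have hv : ((j + 1 : Fin h) : ℕ) = 0 := by
        rw [fin_val_add_one _ hh, hj, Nat.mod_self]
      have hj1 : (j + 1 : Fin h) = 0 := by
        apply Fin.ext; rw [hv]; simp
      have hjv : (j : ℕ) = h - 1 := by omega
      rw [hv, hjv]
      have hy0 : yF t p 0 = t := by unfold yF; simp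
      rw [hy0, hj1]
      have hb : bF p 0 = -(p (inr (inr 0))) := by
        have : ((0 : ℕ) : Fin h) = 0 := by simp
        unfold bF; rw [this]
      rw [hb] at hwrap
      linarith
  · rw [rowY _ _ hh]
    simp

end Psi

/-! ### Wrap conditions -/

section Wrap
variable {V : Type*} [Fintype V] {h : ℕ} [NeZero h]

open Sum

noncomputable def tOdd (p : (V ⊕ (Fin h ⊕ Fin h)) → ℝ) : ℝ :=
  (bF p 0 - ∑ k ∈ Finset.range (h - 1), (-1 : ℝ) ^ (k + 1) * bF p (k + 1)) / 2

lemma tOdd_add (p q : (V ⊕ (Fin h ⊕ Fin h)) → ℝ) : tOdd (p + q) = tOdd p + tOdd q := by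
  unfold tOdd
  have : ∀ k ∈ Finset.range (h - 1), (-1 : ℝ) ^ (k + 1) * bF (p + q) (k + 1)
      = (-1 : ℝ) ^ (k + 1) * bF p (k + 1) + (-1 : ℝ) ^ (k + 1) * bF q (k + 1) := by
    intro k _; rw [bF_add]; ring
  rw [Finset.sum_congr rfl this, Finset.sum_add_distrib, bF_add]
  ring

lemma tOdd_smul (c : ℝ) (p : (V ⊕ (Fin h ⊕ Fin h)) → ℝ) : tOdd (c • p) = c * tOdd p := by
  unfold tOdd
  have : ∀ k ∈ Finset.range (h - 1), (-1 : ℝ) ^ (k + 1) * bF (c • p) (k + 1)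
      = c * ((-1 : ℝ) ^ (k + 1) * bF p (k + 1)) := by
    intro k _; rw [bF_smul]; ring
  rw [Finset.sum_congr rfl this, ← Finset.mul_sum, bF_smul]
  ring

lemma wrap_odd (ho : Odd h) (p : (V ⊕ (Fin h ⊕ Fin h)) → ℝ) :
    tOdd p + yF (tOdd p) p (h - 1) = bF p 0 := by
  unfold yF tOdd
  rw [(Nat.Odd.sub_odd ho odd_one).neg_one_pow]
  ring

lemma wrap_even (hh : 2 ≤ h) (he : Even h) (p : (V ⊕ (Fin h ⊕ Fin h)) → ℝ)
    (hσ : (∑ k ∈ Finset.range h, (-1 : ℝ) ^ k * bF p k) = 0) (t : ℝ) :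
    t + yF t p (h - 1) = bF p 0 := by
  have ho1 : Odd (h - 1) := Nat.Even.sub_odd (by omega) he odd_one
  obtain ⟨m, hm⟩ : ∃ m, h = m + 1 := ⟨h - 1, by omega⟩
  subst hm
  rw [Finset.sum_range_succ'] at hσ
  simp only [pow_zero, one_mul] at hσ
  unfold yF
  rw [ho1.neg_one_pow]
  simp only [Nat.add_sub_cancel]
  linarith [hσ]

lemma sum_range_bF_eq (p : (V ⊕ (Fin h ⊕ Fin h)) → ℝ) :
    (∑ k ∈ Finset.range h, (-1 : ℝ) ^ k * bF p k) = -sigmaF p := by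
  rw [← Fin.sum_univ_eq_sum_range (fun k => (-1 : ℝ) ^ k * bF p k) h]
  unfold sigmaF
  rw [← Finset.sum_neg_distrib]
  refine Finset.sum_congr rfl fun j _ => ?_
  rw [bF_val]
  ring

lemma sigmaF_zero : sigmaF (0 : (V ⊕ (Fin h ⊕ Fin h)) → ℝ) = 0 := by
  unfold sigmaF; simp

end Wrap

/-! ### Decomposition of kernel vectors of the iterated altan -/

section Decompose
variable {V : Type*} [Fintype V] {h : ℕ} [NeZero h]

open Sum

lemma decompose (hh : 2 ≤ h) (G : SimpleGraph V) (H : Fin h → V)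
    (q : ((V ⊕ (Fin h ⊕ Fin h)) ⊕ (Fin h ⊕ Fin h)) → ℝ)
    (hq : IsKernelVector (altan (altan G H) (inducedAttachment V h)) q) :
    (∀ j : Fin h, (q ∘ inl) (inr (inl j)) + (q ∘ inl) (inr (inl (j + 1)))
        + q (inr (inl j)) = 0) ∧
    (∀ j : Fin h, q (inr (inl j)) + q (inr (inl (j + 1))) = 0) ∧
    (∀ j : Fin h, (q ∘ inl) (inr (inr (j + 1))) + q (inr (inr (j + 1)))
        + q (inr (inr j)) = 0) ∧
    (∀ w, Sfun (altan G H) (q ∘ inl) w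
        + aSum (inducedAttachment V h) (fun i => q (inr (inl i))) w = 0) := by
  rw [isKernelVector_iff] at hq
  have d4 : ∀ w, Sfun (altan G H) (q ∘ inl) w
      + aSum (inducedAttachment V h) (fun i => q (inr (inl i))) w = 0 := by
    intro w
    have := hq (inl w)
    rw [rowV] at this
    exact this
  have d2 : ∀ j : Fin h, q (inr (inl j)) + q (inr (inl (j + 1))) = 0 := by
    intro j
    have := hq (inr (inr j))
    rw [rowY _ _ hh] at this
    exact this
  have d3 : ∀ j : Fin h, (q ∘ inl) (inr (inr (j + 1))) + q (inr (inr (j + 1)))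
      + q (inr (inr j)) = 0 := by
    intro j
    have := hq (inr (inl (j + 1)))
    rw [rowX _ _ hh] at this
    simpa [inducedAttachment] using this
  have d1 : ∀ j : Fin h, (q ∘ inl) (inr (inl j)) + (q ∘ inl) (inr (inl (j + 1)))
      + q (inr (inl j)) = 0 := by
    intro j
    have hd := d4 (inr (inr j))
    rw [rowY _ _ hh, aSum_ind_inrr] at hd
    exact hd
  exact ⟨d1, d2, d3, d4⟩

end Decompose

/-! ### Auxiliary alternation lemma -/

section Alt2
variable {h : ℕ} [NeZero h]

lemma altZeroOfZero (hh : 2 ≤ h) (Z : Fin h → ℝ) (hZ : ∀ j, Z j + Z (j + 1) = 0)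
    (h0 : Z 0 = 0) : ∀ j, Z j = 0 := by
  intro j
  have := altClosed hh Z hZ j.val j.isLt
  rw [Fin.eta] at this
  rw [this, fin_zero_mk hh, h0, mul_zero]

end Alt2

/-! ### The comparison linear maps -/

section Maps
variable {V : Type*} [Fintype V] {h : ℕ} [NeZero h]

open Sum

noncomputable def phiOdd :
    (((V ⊕ (Fin h ⊕ Fin h)) ⊕ (Fin h ⊕ Fin h)) → ℝ) →ₗ[ℝ] ((V ⊕ (Fin h ⊕ Fin h)) → ℝ) :=
  LinearMap.funLeft ℝ ℝ inl

@[simp] lemma phiOdd_apply (q : ((V ⊕ (Fin h ⊕ Fin h)) ⊕ (Fin h ⊕ Fin h)) → ℝ) :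
    phiOdd q = q ∘ inl := rfl

noncomputable def phiEven :
    (((V ⊕ (Fin h ⊕ Fin h)) ⊕ (Fin h ⊕ Fin h)) → ℝ) →ₗ[ℝ] ((V ⊕ (Fin h ⊕ Fin h)) → ℝ) where
  toFun q := (q ∘ inl) + (q (inr (inr 0))) • specialVector V h
  map_add' a b := by
    funext w
    simp only [Function.comp_apply, Pi.add_apply, Pi.smul_apply, smul_eq_mul]
    ring
  map_smul' c a := by
    funext w
    simp only [Function.comp_apply, Pi.add_apply, Pi.smul_apply, smul_eq_mul,
      RingHom.id_apply]
    ring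

@[simp] lemma phiEven_apply (q : ((V ⊕ (Fin h ⊕ Fin h)) ⊕ (Fin h ⊕ Fin h)) → ℝ) :
    phiEven q = (q ∘ inl) + (q (inr (inr 0))) • specialVector V h := rfl

noncomputable def psiOddL :
    ((V ⊕ (Fin h ⊕ Fin h)) → ℝ) →ₗ[ℝ] (((V ⊕ (Fin h ⊕ Fin h)) ⊕ (Fin h ⊕ Fin h)) → ℝ) where
  toFun p := psiF (tOdd p) p
  map_add' a b := by
    show psiF (tOdd (a + b)) (a + b) = psiF (tOdd a) a + psiF (tOdd b) b
    rw [tOdd_add, psiF_add]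
  map_smul' c a := by
    show psiF (tOdd (c • a)) (c • a) = c • psiF (tOdd a) a
    rw [tOdd_smul, psiF_smul]

noncomputable def cEv (p : (V ⊕ (Fin h ⊕ Fin h)) → ℝ) : ℝ := sigmaF p / h

lemma cEv_add (p q : (V ⊕ (Fin h ⊕ Fin h)) → ℝ) : cEv (p + q) = cEv p + cEv q := by
  unfold cEv; rw [sigmaF_add]; ring

lemma cEv_smul (c : ℝ) (p : (V ⊕ (Fin h ⊕ Fin h)) → ℝ) : cEv (c • p) = c * cEv p := by
  unfold cEv; rw [sigmaF_smul]; ring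

noncomputable def psiEvenL :
    ((V ⊕ (Fin h ⊕ Fin h)) → ℝ) →ₗ[ℝ] (((V ⊕ (Fin h ⊕ Fin h)) ⊕ (Fin h ⊕ Fin h)) → ℝ) where
  toFun p := psiF (cEv p) (p + (cEv p) • specialVector V h)
  map_add' a b := by
    show psiF (cEv (a + b)) ((a + b) + cEv (a + b) • specialVector V h)
      = psiF (cEv a) (a + cEv a • specialVector V h) + psiF (cEv b) (b + cEv b • specialVector V h)
    rw [cEv_add]
    have rearr : (a + b) + (cEv a + cEv b) • specialVector V h
        = (a + cEv a • specialVector V h) + (b + cEv b • specialVector V h) := by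
      rw [add_smul]; abel
    rw [rearr, psiF_add]
  map_smul' c a := by
    show psiF (cEv (c • a)) ((c • a) + cEv (c • a) • specialVector V h)
      = c • psiF (cEv a) (a + cEv a • specialVector V h)
    rw [cEv_smul]
    have rearr : (c • a) + (c * cEv a) • specialVector V h
        = c • (a + cEv a • specialVector V h) := by
      rw [mul_smul, ← smul_add]
    rw [rearr, psiF_smul]

end Maps

/-! ### Forward analysis -/

section Forward
variable {V : Type*} [Fintype V] {h : ℕ} [NeZero h] (G : SimpleGraph V) (H : Fin h → V)

open Sum

lemma aSum_zero_of (q : ((V ⊕ (Fin h ⊕ Fin h)) ⊕ (Fin h ⊕ Fin h)) → ℝ)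
    (hX : ∀ j : Fin h, q (inr (inl j)) = 0) (w : V ⊕ (Fin h ⊕ Fin h)) :
    aSum (inducedAttachment V h) (fun i => q (inr (inl i))) w = 0 := by
  unfold aSum
  exact Finset.sum_eq_zero fun i _ => by simp [hX i]

lemma odd_forward (hh : 2 ≤ h) (ho : Odd h)
    (q : ((V ⊕ (Fin h ⊕ Fin h)) ⊕ (Fin h ⊕ Fin h)) → ℝ)
    (hq : IsKernelVector (altan (altan G H) (inducedAttachment V h)) q) :
    IsKernelVector (altan G H) (q ∘ inl) := by
  obtain ⟨d1, d2, d3, d4⟩ := decompose hh G H q hq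
  have hX : ∀ j, q (inr (inl j)) = 0 := altZeroOdd hh ho _ d2
  intro w
  have hd := d4 w
  rw [aSum_zero_of q hX w, add_zero] at hd
  exact hd

lemma odd_forward_inj (hh : 2 ≤ h) (ho : Odd h)
    (q : ((V ⊕ (Fin h ⊕ Fin h)) ⊕ (Fin h ⊕ Fin h)) → ℝ)
    (hq : IsKernelVector (altan (altan G H) (inducedAttachment V h)) q)
    (h0 : q ∘ inl = 0) : q = 0 := by
  obtain ⟨d1, d2, d3, d4⟩ := decompose hh G H q hq
  have hX : ∀ j, q (inr (inl j)) = 0 := altZeroOdd hh ho _ d2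
  have hYrec : ∀ j : Fin h, q (inr (inr j)) + q (inr (inr (j + 1))) = 0 := by
    intro j
    have hd := d3 j
    have h00 : (q ∘ inl) (inr (inr (j + 1))) = 0 := by rw [h0]; rfl
    rw [h00] at hd
    linarith
  have hY : ∀ j, q (inr (inr j)) = 0 := altZeroOdd hh ho _ hYrec
  funext w
  rcases w with w | (i | j)
  · simpa using congrFun h0 w
  · simpa using hX i
  · simpa using hY j

lemma even_forward (hh : 2 ≤ h) (he : Even h)
    (q : ((V ⊕ (Fin h ⊕ Fin h)) ⊕ (Fin h ⊕ Fin h)) → ℝ)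
    (hq : IsKernelVector (altan (altan G H) (inducedAttachment V h)) q) :
    (∀ j, q (inr (inl j)) = 0) ∧ IsKernelVector (altan G H) (q ∘ inl)
      ∧ sigmaF (q ∘ inl) = 0 := by
  obtain ⟨d1, d2, d3, d4⟩ := decompose hh G H q hq
  have hs2 : (∑ j : Fin h, (-1 : ℝ) ^ (j : ℕ) * (q ∘ inl) (inr (inl j)))
      + ((∑ j : Fin h, (-1 : ℝ) ^ (j : ℕ) * (q ∘ inl) (inr (inl (j + 1))))
      + (∑ j : Fin h, (-1 : ℝ) ^ (j : ℕ) * q (inr (inl j)))) = 0 := by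
    rw [← Finset.sum_add_distrib, ← Finset.sum_add_distrib]
    refine Finset.sum_eq_zero fun j _ => ?_
    linear_combination ((-1 : ℝ) ^ ((j : Fin h) : ℕ)) * d1 j
  have hsh : (∑ j : Fin h, (-1 : ℝ) ^ (j : ℕ) * (q ∘ inl) (inr (inl (j + 1))))
      = -∑ j : Fin h, (-1 : ℝ) ^ (j : ℕ) * (q ∘ inl) (inr (inl j)) :=
    sumShift hh he (fun j => (q ∘ inl) (inr (inl j)))
  have hsX : (∑ j : Fin h, (-1 : ℝ) ^ (j : ℕ) * q (inr (inl j))) = 0 := by linarith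
  have hX : ∀ j, q (inr (inl j)) = 0 := altZeroEvenSum hh _ d2 hsX
  have hmem : IsKernelVector (altan G H) (q ∘ inl) := by
    intro w
    have hd := d4 w
    rw [aSum_zero_of q hX w, add_zero] at hd
    exact hd
  have hs3 : (∑ j : Fin h, (-1 : ℝ) ^ (j : ℕ) * (q ∘ inl) (inr (inr (j + 1))))
      + ((∑ j : Fin h, (-1 : ℝ) ^ (j : ℕ) * q (inr (inr (j + 1))))
      + (∑ j : Fin h, (-1 : ℝ) ^ (j : ℕ) * q (inr (inr j)))) = 0 := by
    rw [← Finset.sum_add_distrib, ← Finset.sum_add_distrib]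
    refine Finset.sum_eq_zero fun j _ => ?_
    linear_combination ((-1 : ℝ) ^ ((j : Fin h) : ℕ)) * d3 j
  have hshp : (∑ j : Fin h, (-1 : ℝ) ^ (j : ℕ) * (q ∘ inl) (inr (inr (j + 1))))
      = -∑ j : Fin h, (-1 : ℝ) ^ (j : ℕ) * (q ∘ inl) (inr (inr j)) :=
    sumShift hh he (fun j => (q ∘ inl) (inr (inr j)))
  have hshY : (∑ j : Fin h, (-1 : ℝ) ^ (j : ℕ) * q (inr (inr (j + 1))))
      = -∑ j : Fin h, (-1 : ℝ) ^ (j : ℕ) * q (inr (inr j)) :=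
    sumShift hh he (fun j => q (inr (inr j)))
  have hsig : sigmaF (q ∘ inl) = 0 := by
    unfold sigmaF
    linarith
  exact ⟨hX, hmem, hsig⟩

lemma even_forward_inj (hh : 2 ≤ h) (he : Even h)
    (q : ((V ⊕ (Fin h ⊕ Fin h)) ⊕ (Fin h ⊕ Fin h)) → ℝ)
    (hq : IsKernelVector (altan (altan G H) (inducedAttachment V h)) q)
    (h0 : (q ∘ inl) + (q (inr (inr 0))) • specialVector V h = 0) : q = 0 := by
  obtain ⟨hX, hmem, hsig⟩ := even_forward G H hh he q hq
  have hne : (h : ℝ) ≠ 0 := Nat.cast_ne_zero.mpr (by omega)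
  have hY0 : q (inr (inr 0)) = 0 := by
    have h1 : sigmaF ((q ∘ inl) + (q (inr (inr 0))) • specialVector V h) = 0 := by
      rw [h0, sigmaF_zero]
    rw [sigmaF_add, sigmaF_smul, sigmaF_special, hsig] at h1
    have h2 : q (inr (inr 0)) * (h : ℝ) = 0 := by linarith
    exact (mul_eq_zero.mp h2).resolve_right hne
  have hp0 : q ∘ inl = 0 := by
    funext w
    have h3 := congrFun h0 w
    simp only [Pi.add_apply, Pi.smul_apply, smul_eq_mul, Pi.zero_apply] at h3
    rw [hY0, zero_mul, add_zero] at h3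
    simpa using h3
  obtain ⟨d1, d2, d3, d4⟩ := decompose hh G H q hq
  have hYrec : ∀ j : Fin h, q (inr (inr j)) + q (inr (inr (j + 1))) = 0 := by
    intro j
    have hd := d3 j
    have h00 : (q ∘ inl) (inr (inr (j + 1))) = 0 := by rw [hp0]; rfl
    rw [h00] at hd
    linarith
  have hY : ∀ j, q (inr (inr j)) = 0 := altZeroOfZero hh _ hYrec hY0
  funext w
  rcases w with w | (i | j)
  · simpa using congrFun hp0 w
  · simpa using hX i
  · simpa using hY j

end Forward

/-! ### Backward analysis -/

section Backward
variable {V : Type*} [Fintype V] {h : ℕ} [NeZero h] (G : SimpleGraph V) (H : Fin h → V)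

open Sum

lemma odd_backward (hh : 2 ≤ h) (ho : Odd h) (p : (V ⊕ (Fin h ⊕ Fin h)) → ℝ)
    (hp : IsKernelVector (altan G H) p) :
    IsKernelVector (altan (altan G H) (inducedAttachment V h)) (psiOddL p) :=
  psi_mem hh G H (tOdd p) p hp (wrap_odd ho p)

lemma odd_backward_inj (p : (V ⊕ (Fin h ⊕ Fin h)) → ℝ) (h0 : psiOddL p = 0) : p = 0 := by
  funext w
  simpa [psiOddL] using congrFun h0 (inl w)

lemma even_backward (hh : 2 ≤ h) (he : Even h) (p : (V ⊕ (Fin h ⊕ Fin h)) → ℝ)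
    (hp : IsKernelVector (altan G H) p) :
    IsKernelVector (altan (altan G H) (inducedAttachment V h)) (psiEvenL p) := by
  have hne : (h : ℝ) ≠ 0 := Nat.cast_ne_zero.mpr (by omega)
  have hs : specialVector V h ∈ kSub (altan G H) := sEven_kernel hh he G H
  have hp' : IsKernelVector (altan G H) (p + cEv p • specialVector V h) :=
    (kSub (altan G H)).add_mem hp ((kSub (altan G H)).smul_mem (cEv p) hs)
  have hσ' : (∑ k ∈ Finset.range h, (-1 : ℝ) ^ k
      * bF (p + cEv p • specialVector V h) k) = 0 := by
    rw [sum_range_bF_eq, sigmaF_add, sigmaF_smul, sigmaF_special]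
    unfold cEv
    field_simp
    ring
  exact psi_mem hh G H (cEv p) (p + cEv p • specialVector V h) hp'
    (wrap_even hh he _ hσ' (cEv p))

lemma even_backward_inj (hh : 2 ≤ h) (p : (V ⊕ (Fin h ⊕ Fin h)) → ℝ)
    (h0 : psiEvenL p = 0) : p = 0 := by
  have hc : cEv p = 0 := by
    have h1 := congrFun h0 (inr (inr (0 : Fin h)))
    have h2 : yF (cEv p) (p + cEv p • specialVector V h) ((0 : Fin h) : ℕ) = 0 := by
      simpa [psiEvenL] using h1
    rw [show ((0 : Fin h) : ℕ) = 0 by simp] at h2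
    unfold yF at h2
    simpa using h2
  funext w
  have h3 : p w + cEv p * specialVector V h w = 0 := by
    have := congrFun h0 (inl w)
    simpa [psiEvenL] using this
  rw [hc, zero_mul, add_zero] at h3
  simpa using h3

end Backward

/-! ### The glue lemma -/

lemma finrank_eq_of_linear {M₁ M₂ : Type*} [AddCommGroup M₁] [Module ℝ M₁]
    [AddCommGroup M₂] [Module ℝ M₂] [FiniteDimensional ℝ M₁] [FiniteDimensional ℝ M₂]
    (K₁ : Submodule ℝ M₁) (K₂ : Submodule ℝ M₂) (F : M₂ →ₗ[ℝ] M₁) (Ψ : M₁ →ₗ[ℝ] M₂)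
    (hF : ∀ x ∈ K₂, F x ∈ K₁) (hFinj : ∀ x ∈ K₂, F x = 0 → x = 0)
    (hΨ : ∀ x ∈ K₁, Ψ x ∈ K₂) (hΨinj : ∀ x ∈ K₁, Ψ x = 0 → x = 0) :
    Module.finrank ℝ K₂ = Module.finrank ℝ K₁ := by
  let F' : K₂ →ₗ[ℝ] K₁ :=
    LinearMap.codRestrict K₁ (F.comp K₂.subtype) (fun z => hF z.1 z.2)
  let Ψ' : K₁ →ₗ[ℝ] K₂ :=
    LinearMap.codRestrict K₂ (Ψ.comp K₁.subtype) (fun z => hΨ z.1 z.2)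
  have hinjF : Function.Injective F' := by
    rw [← LinearMap.ker_eq_bot, LinearMap.ker_eq_bot']
    intro z hz
    have hval : F z.1 = 0 := congrArg Subtype.val hz
    exact Subtype.ext (hFinj z.1 z.2 hval)
  have hinjΨ : Function.Injective Ψ' := by
    rw [← LinearMap.ker_eq_bot, LinearMap.ker_eq_bot']
    intro z hz
    have hval : Ψ z.1 = 0 := congrArg Subtype.val hz
    exact Subtype.ext (hΨinj z.1 z.2 hval)
  exact le_antisymm (LinearMap.finrank_le_finrank_of_injective hinjF)
    (LinearMap.finrank_le_finrank_of_injective hinjΨ)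

/-! ### The main theorem -/

theorem stmt12 {V : Type*} [Fintype V] {h : ℕ} [NeZero h] (hh : 2 ≤ h)
    (G : SimpleGraph V) (H : Fin h → V) :
    nullity (altan (altan G H) (inducedAttachment V h)) = nullity (altan G H) := by
  rw [nullity_eq_finrank, nullity_eq_finrank]
  rcases Nat.even_or_odd h with he | ho
  · refine finrank_eq_of_linear (kSub (altan G H))
      (kSub (altan (altan G H) (inducedAttachment V h))) phiEven psiEvenL ?_ ?_ ?_ ?_
    · intro x hx
      obtain ⟨hX, hmem, hsig⟩ := even_forward G H hh he x hx
      exact (kSub (altan G H)).add_mem hmem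
        ((kSub (altan G H)).smul_mem _ (sEven_kernel hh he G H))
    · intro x hx h0
      exact even_forward_inj G H hh he x hx h0
    · intro x hx
      exact even_backward G H hh he x hx
    · intro x _ h0
      exact even_backward_inj hh x h0
  · refine finrank_eq_of_linear (kSub (altan G H))
      (kSub (altan (altan G H) (inducedAttachment V h))) phiOdd psiOddL ?_ ?_ ?_ ?_
    · intro x hx
      exact odd_forward G H hh ho x hx
    · intro x hx h0
      exact odd_forward_inj G H hh ho x hx h0
    · intro x hx
      exact odd_backward G H hh ho x hx
    · intro x _ h0
      exact odd_backward_inj x h0
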